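/- arXiv:2403.17028 — 6 statements merged into one kernel-verified Lean document; each statement's English description precedes it below -/
import Mathlib

section
/- The subgroupoid of the dyadic rationals under the arithmetic mean operation generated by {0, 1} equals the set of dyadic rationals in the closed interval [0,1]. -/
def IsDyadic (x : ℝ) : Prop := ∃ k : ℤ, ∃ n : ℕ, x = (k : ℝ) / 2 ^ n

inductive MeanClosure (X : Set ℝ) : ℝ → Prop
  | base {x : ℝ} : x ∈ X → MeanClosure X x
  | mean {x y : ℝ} : MeanClosure X x → MeanClosure X y → MeanClosure X ((x + y) / 2)

lemma mc_of_frac : ∀ n : ℕ, ∀ k : ℤ, 0 ≤ k → k ≤ 2 ^ n →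
    MeanClosure {0, 1} ((k : ℝ) / 2 ^ n) := by
  intro n
  induction n with
  | zero =>
    intro k hk0 hk1
    interval_cases k
    · simpa using MeanClosure.base (X := {0, 1}) (by simp)
    · simpa using MeanClosure.base (X := {0, 1}) (by simp : (1:ℝ) ∈ ({0,1} : Set ℝ))
  | succ n ih =>
    intro k hk0 hk1
    set a : ℤ := min k (2 ^ n) with ha
    set b : ℤ := k - a with hb
    have ha0 : 0 ≤ a := le_min hk0 (by positivity)
    have ha1 : a ≤ 2 ^ n := min_le_right _ _
    have hb0 : 0 ≤ b := by simp [hb, ha]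
    have hb1 : b ≤ 2 ^ n := by
      have : (2:ℤ) ^ (n+1) = 2 ^ n + 2 ^ n := by ring
      omega
    have key : (k : ℝ) / 2 ^ (n+1) = ((a : ℝ) / 2 ^ n + (b : ℝ) / 2 ^ n) / 2 := by
      have hab : (k : ℝ) = a + b := by push_cast [hb]; ring
      rw [hab, pow_succ]
      ring
    rw [key]
    exact MeanClosure.mean (ih a ha0 ha1) (ih b hb0 hb1)

theorem subgroupoid_zero_one :
    {x : ℝ | MeanClosure {0, 1} x} = {x : ℝ | IsDyadic x ∧ 0 ≤ x ∧ x ≤ 1} := by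
  ext x
  simp only [Set.mem_setOf_eq]
  constructor
  · intro h
    induction h with
    | base hx =>
      rcases hx with rfl | rfl
      · exact ⟨⟨0, 0, by norm_num⟩, le_refl _, by norm_num⟩
      · exact ⟨⟨1, 0, by norm_num⟩, by norm_num, le_refl _⟩
    | mean hx hy ihx ihy =>
      obtain ⟨⟨k, n, rfl⟩, hx0, hx1⟩ := ihx
      obtain ⟨⟨l, m, rfl⟩, hy0, hy1⟩ := ihy
      refine ⟨⟨k * 2 ^ m + l * 2 ^ n, n + m + 1, ?_⟩, by linarith, by linarith⟩
      rw [div_add_div _ _ (by positivity : (2:ℝ)^n ≠ 0) (by positivity : (2:ℝ)^m ≠ 0),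
        div_div]
      push_cast
      congr 1
      · ring
      · ring
  · rintro ⟨⟨k, n, rfl⟩, hx0, hx1⟩
    apply mc_of_frac
    · by_contra h
      push_neg at h
      have : (k : ℝ) < 0 := by exact_mod_cast h
      have : (k : ℝ) / 2 ^ n < 0 := div_neg_of_neg_of_pos this (by positivity)
      linarith
    · by_contra h
      push_neg at h
      have : (2:ℝ) ^ n < k := by exact_mod_cast h
      have : (1:ℝ) < (k : ℝ) / 2 ^ n := by
        rw [lt_div_iff₀ (by positivity)]
        linarith
      linarith
end

section
/- The subgroupoid of the dyadic rationals under the arithmetic mean operation generated by {0, 3} equals the set of dyadic rationals in [0,3] of the form 3d for a dyadic rational d ∈ [0,1]; in particular 1 does not belong to this subgroupoid. -/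
lemma dyadic_mean {d e : ℝ} (hd : IsDyadic d) (he : IsDyadic e) : IsDyadic ((d + e) / 2) := by
  obtain ⟨k, n, rfl⟩ := hd
  obtain ⟨l, m, rfl⟩ := he
  refine ⟨k * 2 ^ m + l * 2 ^ n, n + m + 1, ?_⟩
  rw [div_add_div _ _ (by positivity) (by positivity), div_div,
    div_eq_div_iff (by positivity) (by positivity)]
  push_cast
  ring

lemma aux (n : ℕ) : ∀ k : ℤ, 0 ≤ k → k ≤ 2 ^ n →
    MeanClosure {0, 3} (3 * (k : ℝ) / 2 ^ n) := by
  induction n with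
  | zero =>
    intro k h1 h2
    simp only [pow_zero] at h2 ⊢
    interval_cases k
    · simpa using MeanClosure.base (X := {0, 3}) (x := 0) (by simp)
    · simpa using MeanClosure.base (X := {0, 3}) (x := 3) (by simp)
  | succ n ih =>
    intro k h1 h2
    have hp : (2 : ℤ) ^ (n + 1) = 2 * 2 ^ n := by ring
    have ha := ih (k / 2) (by omega) (by omega)
    have hb := ih (k - k / 2) (by omega) (by omega)
    have h := MeanClosure.mean ha hb
    have hcast : ((k - k / 2 : ℤ) : ℝ) = (k : ℝ) - ((k / 2 : ℤ) : ℝ) := by push_cast; ring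
    rw [hcast] at h
    have key : (3 * ((k / 2 : ℤ) : ℝ) / 2 ^ n + 3 * ((k : ℝ) - ((k / 2 : ℤ) : ℝ)) / 2 ^ n) / 2
        = 3 * (k : ℝ) / 2 ^ (n + 1) := by
      rw [pow_succ]
      field_simp
      ring
    rwa [key] at h

theorem subgroupoid_zero_three :
    ({x : ℝ | MeanClosure {0, 3} x}
      = {x : ℝ | ∃ d : ℝ, IsDyadic d ∧ 0 ≤ d ∧ d ≤ 1 ∧ x = 3 * d}) ∧
    ¬ MeanClosure {0, 3} 1 := by
  have heq : ({x : ℝ | MeanClosure {0, 3} x}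
      = {x : ℝ | ∃ d : ℝ, IsDyadic d ∧ 0 ≤ d ∧ d ≤ 1 ∧ x = 3 * d}) := by
    ext x
    constructor
    · intro h
      induction h with
      | base hx =>
        rcases hx with rfl | rfl
        · exact ⟨0, ⟨0, 0, by norm_num⟩, le_refl 0, by norm_num, by norm_num⟩
        · exact ⟨1, ⟨1, 0, by norm_num⟩, by norm_num, le_refl 1, by norm_num⟩
      | mean _ _ ihx ihy =>
        obtain ⟨d, hd, hd0, hd1, rfl⟩ := ihx
        obtain ⟨e, he, he0, he1, rfl⟩ := ihy
        refine ⟨(d + e) / 2, dyadic_mean hd he, by linarith, by linarith, by ring⟩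
    · rintro ⟨d, ⟨k, n, rfl⟩, hd0, hd1, rfl⟩
      have h2n : (0 : ℝ) < 2 ^ n := by positivity
      have hk0 : (0 : ℤ) ≤ k := by
        rw [le_div_iff₀ h2n, zero_mul] at hd0
        exact_mod_cast hd0
      have hk1 : k ≤ 2 ^ n := by
        have : (k : ℝ) ≤ 2 ^ n := by
          rw [div_le_one h2n] at hd1
          exact hd1
        exact_mod_cast this
      have := aux n k hk0 hk1
      have heq2 : 3 * ((k : ℝ) / 2 ^ n) = 3 * (k : ℝ) / 2 ^ n := by ring
      rwa [heq2]
  refine ⟨heq, ?_⟩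
  intro h
  have h1 : (1 : ℝ) ∈ {x : ℝ | MeanClosure {0, 3} x} := h
  rw [heq] at h1
  obtain ⟨d, ⟨k, n, rfl⟩, _, _, hx⟩ := h1
  have h2n : (0 : ℝ) < 2 ^ n := by positivity
  have hr : (3 : ℝ) * k = 2 ^ n := by
    field_simp at hx
    linarith
  have hz : (3 : ℤ) * k = 2 ^ n := by exact_mod_cast hr
  have hdvd : (3 : ℤ) ∣ 2 ^ n := ⟨k, hz.symm⟩
  have := Int.Prime.dvd_pow' (p := 3) (by norm_num) hdvd
  omega
end

section
/- For every odd positive integer k > 1, the dyadic interval D_k = [0,k] ∩ D (under the arithmetic mean operation) is not generated by its two endpoints 0 and k. -/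
lemma meanClosure_form (k : ℕ) {x : ℝ} (hx : MeanClosure {0, (k : ℝ)} x) :
    ∃ m : ℤ, ∃ n : ℕ, x = (m : ℝ) * k / 2 ^ n := by
  induction hx with
  | base h =>
    rcases h with h | h
    · exact ⟨0, 0, by simp [h]⟩
    · exact ⟨1, 0, by simp_all⟩
  | mean _ _ ih1 ih2 =>
    obtain ⟨m1, n1, rfl⟩ := ih1
    obtain ⟨m2, n2, rfl⟩ := ih2
    refine ⟨m1 * 2 ^ n2 + m2 * 2 ^ n1, n1 + n2 + 1, ?_⟩
    push_cast
    field_simp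
    ring

theorem interval_not_generated_by_endpoints (k : ℕ) (hodd : Odd k) (hk : 1 < k) :
    {x : ℝ | MeanClosure {0, (k : ℝ)} x} ≠ {x : ℝ | IsDyadic x ∧ 0 ≤ x ∧ x ≤ (k : ℝ)} := by
  intro h
  have h1 : (1 : ℝ) ∈ {x : ℝ | IsDyadic x ∧ 0 ≤ x ∧ x ≤ (k : ℝ)} := by
    refine ⟨⟨1, 0, by norm_num⟩, by norm_num, ?_⟩
    exact_mod_cast hk.le
  rw [← h] at h1
  obtain ⟨m, n, hmn⟩ := meanClosure_form k h1
  have hk0 : (0:ℝ) < k := by positivity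
  have h2 : (2:ℝ) ^ n = m * k := by
    field_simp at hmn
    linarith [hmn]
  have h2' : (2:ℤ) ^ n = m * k := by exact_mod_cast h2
  have hdvd : (k : ℤ) ∣ 2 ^ n := ⟨m, by linarith [h2']⟩
  have hdvd' : k ∣ 2 ^ n := by exact_mod_cast hdvd
  have hcop : Nat.Coprime k 2 := by
    exact hodd.coprime_two_right
  have := (Nat.Coprime.pow_right n hcop).eq_one_of_dvd hdvd'
  omega
end

section
/- For any dyadic rationals a < b < c such that the subgroupoid generated by {a,b} equals all dyadic rationals in [a,b] (i.e., [a,b] ∩ D is a dyadic simplex with (b−a) a power of 2 times a unit), the subgroupoid of (D, ∘) generated by {a, b, c} equals the set of all dyadic rationals in [a,c]. -/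
lemma isDyadic_mean {x y : ℝ} (hx : IsDyadic x) (hy : IsDyadic y) :
    IsDyadic ((x + y) / 2) := by
  obtain ⟨k, n, rfl⟩ := hx; obtain ⟨l, m, rfl⟩ := hy
  refine ⟨k * 2 ^ m + l * 2 ^ n, n + m + 1, ?_⟩
  have h1 : (2:ℝ) ^ n ≠ 0 := by positivity
  have h2 : (2:ℝ) ^ m ≠ 0 := by positivity
  push_cast
  rw [div_add_div _ _ h1 h2, div_div, div_eq_div_iff (by positivity) (by positivity)]
  ring

lemma isDyadic_reflect {x y : ℝ} (hx : IsDyadic x) (hy : IsDyadic y) :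
    IsDyadic (2 * x - y) := by
  obtain ⟨k, n, rfl⟩ := hx; obtain ⟨l, m, rfl⟩ := hy
  refine ⟨2 * k * 2 ^ m - l * 2 ^ n, n + m, ?_⟩
  have h1 : (2:ℝ) ^ n ≠ 0 := by positivity
  have h2 : (2:ℝ) ^ m ≠ 0 := by positivity
  push_cast
  rw [mul_div_assoc', div_sub_div _ _ h1 h2, div_eq_div_iff (by positivity) (by positivity)]
  ring

lemma isDyadic_max {x y : ℝ} (hx : IsDyadic x) (hy : IsDyadic y) :
    IsDyadic (max x y) := by
  rcases le_total x y with h | h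
  · rwa [max_eq_right h]
  · rwa [max_eq_left h]

lemma isDyadic_add {x y : ℝ} (hx : IsDyadic x) (hy : IsDyadic y) :
    IsDyadic (x + y) := by
  obtain ⟨k, n, rfl⟩ := hx; obtain ⟨l, m, rfl⟩ := hy
  refine ⟨k * 2 ^ m + l * 2 ^ n, n + m, ?_⟩
  have h1 : (2:ℝ) ^ n ≠ 0 := by positivity
  have h2 : (2:ℝ) ^ m ≠ 0 := by positivity
  push_cast
  rw [div_add_div _ _ h1 h2, div_eq_div_iff (by positivity) (by positivity)]
  ring

lemma isDyadic_sub {x y : ℝ} (hx : IsDyadic x) (hy : IsDyadic y) :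
    IsDyadic (x - y) := by
  obtain ⟨k, n, rfl⟩ := hx; obtain ⟨l, m, rfl⟩ := hy
  refine ⟨k * 2 ^ m - l * 2 ^ n, n + m, ?_⟩
  have h1 : (2:ℝ) ^ n ≠ 0 := by positivity
  have h2 : (2:ℝ) ^ m ≠ 0 := by positivity
  push_cast
  rw [div_sub_div _ _ h1 h2, div_eq_div_iff (by positivity) (by positivity)]
  ring

lemma isDyadic_mul {x y : ℝ} (hx : IsDyadic x) (hy : IsDyadic y) :
    IsDyadic (x * y) := by
  obtain ⟨k, n, rfl⟩ := hx; obtain ⟨l, m, rfl⟩ := hy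
  refine ⟨k * l, n + m, ?_⟩
  push_cast
  rw [div_mul_div_comm, ← pow_add]

lemma exists_dyadic_btwn {p q : ℝ} (h : p < q) :
    ∃ t : ℝ, IsDyadic t ∧ p < t ∧ t < q := by
  obtain ⟨n, hn⟩ := pow_unbounded_of_one_lt (R := ℝ) (q - p)⁻¹ one_lt_two
  have h2n : (0:ℝ) < 2 ^ n := by positivity
  have hqp : (0:ℝ) < q - p := by linarith
  have hlt : (1:ℝ) / 2 ^ n < q - p := by
    rw [div_lt_iff₀ h2n]
    calc (1:ℝ) = (q - p) * (q - p)⁻¹ := by field_simp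
    _ < (q - p) * 2 ^ n := mul_lt_mul_of_pos_left hn hqp
  refine ⟨((⌊p * 2 ^ n⌋ + 1 : ℤ) : ℝ) / 2 ^ n, ⟨⌊p * 2 ^ n⌋ + 1, n, rfl⟩, ?_, ?_⟩
  · rw [lt_div_iff₀ h2n]
    push_cast
    have := Int.lt_floor_add_one (p * 2 ^ n)
    linarith
  · rw [div_lt_iff₀ h2n]
    push_cast
    have h3 := Int.floor_le (p * 2 ^ n)
    have h4 := (div_lt_iff₀ h2n).1 hlt
    nlinarith
  
lemma meanClosure_mono {X Y : Set ℝ} (h : X ⊆ Y) {x : ℝ} (hx : MeanClosure X x) :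
    MeanClosure Y x := by
  induction hx with
  | base h' => exact .base (h h')
  | mean _ _ ih1 ih2 => exact .mean ih1 ih2

/-- midpoint of two good intervals is good -/
lemma good_mean {T : Set ℝ} {p q r s : ℝ}
    (hp : IsDyadic p) (hs : IsDyadic s)
    (hpq : p ≤ q) (hrs : r ≤ s)
    (h1 : ∀ x, IsDyadic x → p ≤ x → x ≤ q → MeanClosure T x)
    (h2 : ∀ x, IsDyadic x → r ≤ x → x ≤ s → MeanClosure T x) :
    ∀ x, IsDyadic x → (p + r) / 2 ≤ x → x ≤ (q + s) / 2 → MeanClosure T x := by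
  intro e he hle hge
  have hxd : IsDyadic (max p (2 * e - s)) := isDyadic_max hp (isDyadic_reflect he hs)
  have hx2 : max p (2 * e - s) ≤ q := max_le hpq (by linarith)
  have hyd : IsDyadic (2 * e - max p (2 * e - s)) := isDyadic_reflect he hxd
  have hy1 : r ≤ 2 * e - max p (2 * e - s) := by
    have hle' : max p (2 * e - s) ≤ 2 * e - r := max_le (by linarith) (by linarith)
    linarith
  have hy2 : 2 * e - max p (2 * e - s) ≤ s := by
    have := le_max_right p (2 * e - s)
    linarith
  have hmem := MeanClosure.mean (h1 _ hxd (le_max_left _ _) hx2) (h2 _ hyd hy1 hy2)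
  have heq : (max p (2 * e - s) + (2 * e - max p (2 * e - s))) / 2 = e := by ring
  rwa [heq] at hmem

theorem three_gen_lemma (a b c : ℝ)
    (ha : IsDyadic a) (hb : IsDyadic b) (hc : IsDyadic c)
    (hab : a < b) (hbc : b < c)
    (hsimp : {x : ℝ | MeanClosure {a, b} x} = {x : ℝ | IsDyadic x ∧ a ≤ x ∧ x ≤ b}) :
    {x : ℝ | MeanClosure {a, b, c} x} = {x : ℝ | IsDyadic x ∧ a ≤ x ∧ x ≤ c} := by
  have hba : (0:ℝ) < b - a := by linarith
  have hne : b - a ≠ 0 := ne_of_gt hba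
  have hsub : ({a, b} : Set ℝ) ⊆ {a, b, c} := by
    intro x hx
    simp only [Set.mem_insert_iff, Set.mem_singleton_iff] at hx ⊢
    tauto
  have hgen : ∀ x, IsDyadic x → a ≤ x → x ≤ b → MeanClosure {a, b, c} x := by
    intro x hxd h1 h2
    have hx : x ∈ {x : ℝ | MeanClosure {a, b} x} := by
      rw [hsimp]; exact ⟨hxd, h1, h2⟩
    exact meanClosure_mono hsub hx
  have hcmem : MeanClosure {a, b, c} c := .base (by simp)
  -- main induction: for u in the closure of {a,b}, the interval
  -- [((b-u)a+(u-a)c)/(b-a), ((b-u)b+(u-a)c)/(b-a)] is "good"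
  have main : ∀ u, MeanClosure {a, b} u →
      IsDyadic (((b - u) * a + (u - a) * c) / (b - a)) ∧
      IsDyadic (((b - u) * b + (u - a) * c) / (b - a)) ∧
      ((b - u) * a + (u - a) * c) / (b - a) ≤ ((b - u) * b + (u - a) * c) / (b - a) ∧
      ∀ x, IsDyadic x → ((b - u) * a + (u - a) * c) / (b - a) ≤ x →
        x ≤ ((b - u) * b + (u - a) * c) / (b - a) → MeanClosure {a, b, c} x := by
    intro u hu
    induction hu with
    | @base u h =>
      rcases h with h | h
      · rw [show u = a from h]
        have e1 : ((b - a) * a + (a - a) * c) / (b - a) = a := by field_simp; ring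
        have e2 : ((b - a) * b + (a - a) * c) / (b - a) = b := by field_simp; ring
        rw [e1, e2]
        exact ⟨ha, hb, le_of_lt hab, hgen⟩
      · rw [show u = b from h]
        have e1 : ((b - b) * a + (b - a) * c) / (b - a) = c := by field_simp; ring
        have e2 : ((b - b) * b + (b - a) * c) / (b - a) = c := by field_simp; ring
        rw [e1, e2]
        refine ⟨hc, hc, le_refl _, ?_⟩
        intro x _ h1 h2
        rw [le_antisymm h2 h1]
        exact hcmem
    | @mean u v hu hv ih1 ih2 =>
      obtain ⟨hL1, hU1, hle1, hgood1⟩ := ih1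
      obtain ⟨hL2, hU2, hle2, hgood2⟩ := ih2
      have eL : ((b - (u + v) / 2) * a + ((u + v) / 2 - a) * c) / (b - a) =
          (((b - u) * a + (u - a) * c) / (b - a) + ((b - v) * a + (v - a) * c) / (b - a)) / 2 := by
        field_simp
        ring
      have eU : ((b - (u + v) / 2) * b + ((u + v) / 2 - a) * c) / (b - a) =
          (((b - u) * b + (u - a) * c) / (b - a) + ((b - v) * b + (v - a) * c) / (b - a)) / 2 := by
        field_simp
        ring
      rw [eL, eU]
      exact ⟨isDyadic_mean hL1 hL2, isDyadic_mean hU1 hU2, by linarith,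
        good_mean hL1 hU2 hle1 hle2 hgood1 hgood2⟩
  ext x
  simp only [Set.mem_setOf_eq]
  constructor
  · intro h
    induction h with
    | @base x h =>
      rcases h with h | h | h
      · rw [h]; exact ⟨ha, le_refl a, by linarith⟩
      · rw [h]; exact ⟨hb, le_of_lt hab, le_of_lt hbc⟩
      · rw [h]; exact ⟨hc, by linarith, le_refl c⟩
    | mean hx hy ih1 ih2 =>
      obtain ⟨d1, l1, u1⟩ := ih1
      obtain ⟨d2, l2, u2⟩ := ih2
      exact ⟨isDyadic_mean d1 d2, by linarith, by linarith⟩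
  · rintro ⟨hxd, hax, hxc⟩
    rcases le_or_gt x b with hxb | hbx
    · exact hgen x hxd hax hxb
    rcases eq_or_lt_of_le hxc with heq | hxc'
    · rw [heq]; exact hcmem
    -- now b < x < c
    have hcb : (0:ℝ) < c - b := by linarith
    have hca : (0:ℝ) < c - a := by linarith
    have hlt : (x - b) / (c - b) < (x - a) / (c - a) := by
      rw [div_lt_div_iff₀ hcb hca]
      nlinarith
    obtain ⟨t, htd, ht1, ht2⟩ := exists_dyadic_btwn hlt
    have ht0 : 0 < t := lt_of_le_of_lt (div_nonneg (by linarith) (by linarith)) ht1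
    have ht1' : t < 1 := by
      have h1 : (x - a) / (c - a) < 1 := by rw [div_lt_one hca]; linarith
      linarith
    have hud : IsDyadic (a + t * (b - a)) :=
      isDyadic_add ha (isDyadic_mul htd (isDyadic_sub hb ha))
    have humem : MeanClosure {a, b} (a + t * (b - a)) := by
      have hmem : (a + t * (b - a)) ∈ {x : ℝ | IsDyadic x ∧ a ≤ x ∧ x ≤ b} := by
        refine ⟨hud, by nlinarith, by nlinarith⟩
      rw [← hsimp] at hmem
      exact hmem
    obtain ⟨_, _, _, hgood⟩ := main _ humem
    apply hgood x hxd
    · rw [div_le_iff₀ hba]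
      have h2 : t * (c - a) < x - a := (lt_div_iff₀ hca).1 ht2
      have h3 : a + t * (c - a) ≤ x := by linarith
      have key := mul_le_mul_of_nonneg_left h3 (le_of_lt hba)
      nlinarith [key]
    · rw [le_div_iff₀ hba]
      have h2 : x - b < t * (c - b) := (div_lt_iff₀ hcb).1 ht1
      have h3 : x ≤ b + t * (c - b) := by linarith
      have key := mul_le_mul_of_nonneg_left h3 (le_of_lt hba)
      nlinarith [key]
end

section
/- The subgroupoid of the dyadic rationals under arithmetic mean generated by {0, 2^n, 2k+1}, where n ≥ 0 and 0 < 2k+1, with 2^n < 2k+1, coincides with the set of all dyadic rationals in the interval [0, 2k+1]. -/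
lemma comb_mem (n : ℕ) (K : ℝ) : ∀ m b c : ℕ, b + c ≤ 2 ^ m →
    MeanClosure {0, (2:ℝ) ^ n, K} (((b:ℝ) * 2 ^ n + (c:ℝ) * K) / 2 ^ m) := by
  intro m
  induction m with
  | zero =>
    intro b c hbc
    simp only [pow_zero] at hbc
    have hcase : (b = 0 ∧ c = 0) ∨ (b = 1 ∧ c = 0) ∨ (b = 0 ∧ c = 1) := by omega
    rcases hcase with ⟨rfl, rfl⟩ | ⟨rfl, rfl⟩ | ⟨rfl, rfl⟩
    · norm_num
      exact MeanClosure.base (by simp)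
    · norm_num
      exact MeanClosure.base (by simp)
    · norm_num
      exact MeanClosure.base (by simp)
  | succ m ih =>
    intro b c hbc
    obtain ⟨b1, b2, c1, c2, hb, hc, h1, h2⟩ :
        ∃ b1 b2 c1 c2, b1 + b2 = b ∧ c1 + c2 = c ∧ b1 + c1 ≤ 2 ^ m ∧ b2 + c2 ≤ 2 ^ m := by
      have hpow : (2:ℕ) ^ (m + 1) = 2 ^ m + 2 ^ m := by ring
      refine ⟨b / 2, b - b / 2, c - c / 2, c / 2, ?_, ?_, ?_, ?_⟩ <;> omega
    have hmem := MeanClosure.mean (ih b1 c1 h1) (ih b2 c2 h2)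
    have heq : ((b:ℝ) * 2 ^ n + (c:ℝ) * K) / 2 ^ (m+1) =
        (((b1:ℝ) * 2 ^ n + (c1:ℝ) * K) / 2 ^ m
          + ((b2:ℝ) * 2 ^ n + (c2:ℝ) * K) / 2 ^ m) / 2 := by
      subst hb hc
      push_cast
      rw [pow_succ]
      have hp : ((2:ℝ) ^ m) ≠ 0 := by positivity
      field_simp
      ring
    rw [heq]
    exact hmem

lemma rep_exists (n k : ℕ) (hK : (2:ℤ) ^ n < 2 * k + 1) (a : ℤ) (p : ℕ)
    (ha0 : 0 < a) (ha1 : a < (2 * k + 1) * 2 ^ p) :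
    ∃ (q : ℕ) (b c : ℕ), b + c ≤ 2 ^ (p + q) ∧
      (b:ℤ) * 2 ^ n + (c:ℤ) * (2 * k + 1) = a * 2 ^ q := by
  set K : ℤ := 2 * k + 1 with hKdef
  clear_value K
  have hKpos : 0 < K := by rw [hKdef]; positivity
  set q : ℕ := n + (2 * k + 1) + (2 * k + 1) with hqdef
  clear_value q
  have hNpos : (0:ℤ) < 2 ^ n := by positivity
  have hN1 : (1:ℤ) ≤ 2 ^ n := hNpos
  have hKle : K ≤ 2 ^ (2 * k + 1) := by
    rw [hKdef]
    have h1 : (2 * k + 1 : ℕ) < 2 ^ (2 * k + 1) := Nat.lt_two_pow_self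
    exact_mod_cast h1.le
  have hQ : (2:ℤ) ^ q = 2 ^ n * (2 ^ (2*k+1) * 2 ^ (2*k+1)) := by
    rw [hqdef]; ring
  have hP1 : (1:ℤ) ≤ 2 ^ (2*k+1) := one_le_pow₀ (by norm_num)
  have hQ1 : K * 2 ^ n ≤ 2 ^ q := by
    rw [hQ]; nlinarith
  have hQ2 : K * K ≤ 2 ^ q := by
    rw [hQ]; nlinarith
  -- Bezout
  have hcop : IsCoprime ((2:ℤ) ^ n) K := by
    have h2 : IsCoprime (2:ℤ) K := ⟨-(k:ℤ), 1, by rw [hKdef]; ring⟩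
    exact h2.pow_left
  obtain ⟨u, v, huv⟩ := hcop
  set A : ℤ := a * 2 ^ q with hAdef
  clear_value A
  have h2q : (0:ℤ) < 2 ^ q := by positivity
  have hA1 : 2 ^ q ≤ A := by
    rw [hAdef]; nlinarith
  have hA2 : A ≤ K * 2 ^ (p + q) - 2 ^ q := by
    have hpq : (2:ℤ) ^ (p+q) = 2 ^ p * 2 ^ q := pow_add 2 p q
    have ha' : a ≤ K * 2 ^ p - 1 := by omega
    have h3 : a * 2 ^ q ≤ (K * 2 ^ p - 1) * 2 ^ q :=
      mul_le_mul_of_nonneg_right ha' h2q.le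
    rw [hAdef, hpq]
    nlinarith
  set cmax : ℤ := A / K with hcmaxdef
  clear_value cmax
  have hdm := Int.mul_ediv_add_emod A K
  have hm0 : 0 ≤ A % K := Int.emod_nonneg A (by omega)
  have hm1 : A % K < K := Int.emod_lt_of_pos A hKpos
  have hKcmax : K * cmax ≤ A := by
    rw [hcmaxdef]; linarith
  have hKcmax2 : A < K * cmax + K := by
    rw [hcmaxdef]; linarith
  set r : ℤ := (cmax - A * v) % 2 ^ n with hrdef
  clear_value r
  have hr0 : 0 ≤ r := by rw [hrdef]; exact Int.emod_nonneg _ (by positivity)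
  have hr1 : r < 2 ^ n := by rw [hrdef]; exact Int.emod_lt_of_pos _ hNpos
  set c : ℤ := cmax - r with hcdef
  clear_value c
  obtain ⟨s, hs⟩ : (2:ℤ) ^ n ∣ (cmax - A * v) - r := Int.dvd_self_sub_of_emod_eq hrdef.symm
  have hdvd : A - K * c = 2 ^ n * (A * u - K * s) := by
    linear_combination (-A) * huv - K * hs - K * hcdef
  set b : ℤ := A * u - K * s with hbdef
  clear_value b
  -- key bounds
  have hcmax_lb : 2 ^ n ≤ cmax := by
    rw [hcmaxdef, Int.le_ediv_iff_mul_le hKpos]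
    calc (2:ℤ) ^ n * K = K * 2 ^ n := by ring
    _ ≤ 2 ^ q := hQ1
    _ ≤ A := hA1
  have hc0 : 0 < c := by rw [hcdef]; linarith
  have hcle : c ≤ cmax := by rw [hcdef]; linarith
  have hKc : K * c ≤ A := by
    calc K * c ≤ K * cmax := mul_le_mul_of_nonneg_left hcle hKpos.le
    _ ≤ A := hKcmax
  have hb2 : b * 2 ^ n = A - K * c := by rw [hdvd]; ring
  have hb0 : 0 ≤ b := by
    by_contra hb
    push_neg at hb
    have hneg := mul_neg_of_pos_of_neg hNpos hb
    linarith [hKc, hdvd]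
  have hKr : K * r ≤ K * (2 ^ n - 1) :=
    mul_le_mul_of_nonneg_left (by linarith) hKpos.le
  have hclb : A - K * 2 ^ n ≤ K * c := by
    have hKc_eq : K * c = K * cmax - K * r := by rw [hcdef]; ring
    linarith
  have hKN : (0:ℤ) < K - 2 ^ n := by linarith
  have hbc : b * 2 ^ n + c * 2 ^ n ≤ 2 ^ (p + q) * 2 ^ n := by
    have e2 : (A - K * 2 ^ n) * (K - 2 ^ n) ≤ (K * c) * (K - 2 ^ n) :=
      mul_le_mul_of_nonneg_right hclb hKN.le
    have hKK : K * (K - 2 ^ n) ≤ K * K :=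
      mul_le_mul_of_nonneg_left (by linarith) hKpos.le
    have h1 : A + K * (K - 2 ^ n) ≤ K * 2 ^ (p + q) := by linarith
    have e4 := mul_le_mul_of_nonneg_right h1 hNpos.le
    have f1 : K * (b * 2 ^ n) = K * A - K * (K * c) := by linear_combination K * hb2
    have hKmul : K * (b * 2 ^ n + c * 2 ^ n) ≤ K * (2 ^ (p+q) * 2 ^ n) := by
      linarith [e2, e4, f1]
    exact le_of_mul_le_mul_left hKmul hKpos
  refine ⟨q, b.toNat, c.toNat, ?_, ?_⟩
  · have hsum : b + c ≤ 2 ^ (p + q) := by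
      have h' : (b + c) * 2 ^ n ≤ 2 ^ (p + q) * 2 ^ n := by
        calc (b + c) * 2 ^ n = b * 2 ^ n + c * 2 ^ n := by ring
        _ ≤ _ := hbc
      exact le_of_mul_le_mul_right h' hNpos
    have hb' : (b.toNat : ℤ) = b := Int.toNat_of_nonneg hb0
    have hc' : (c.toNat : ℤ) = c := Int.toNat_of_nonneg hc0.le
    have h2 : (b.toNat : ℤ) + (c.toNat : ℤ) ≤ (2:ℤ) ^ (p + q) := by
      rw [hb', hc']; exact hsum
    exact_mod_cast h2
  · rw [Int.toNat_of_nonneg hb0, Int.toNat_of_nonneg hc0.le]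
    linear_combination hb2 + hAdef

theorem gen_zero_pow_odd (n k : ℕ) (h : (2 : ℝ) ^ n < 2 * k + 1) :
    {x : ℝ | MeanClosure {0, (2 : ℝ) ^ n, (2 * (k : ℝ) + 1)} x}
      = {x : ℝ | IsDyadic x ∧ 0 ≤ x ∧ x ≤ 2 * (k : ℝ) + 1} := by
  ext x
  simp only [Set.mem_setOf_eq]
  constructor
  · intro hx
    induction hx with
    | base hmem =>
      simp only [Set.mem_insert_iff, Set.mem_singleton_iff] at hmem
      rcases hmem with rfl | rfl | rfl
      · exact ⟨⟨0, 0, by norm_num⟩, le_refl 0, by positivity⟩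
      · exact ⟨⟨2 ^ n, 0, by push_cast; norm_num⟩, by positivity, h.le⟩
      · exact ⟨⟨2 * k + 1, 0, by push_cast; norm_num⟩, by positivity, le_refl _⟩
    | mean hx hy ihx ihy =>
      obtain ⟨dx, hx0, hx1⟩ := ihx
      obtain ⟨dy, hy0, hy1⟩ := ihy
      exact ⟨isDyadic_mean dx dy, by linarith, by linarith⟩
  · rintro ⟨⟨a, p, rfl⟩, h0, h1⟩
    have hp : (0:ℝ) < 2 ^ p := by positivity
    have ha0 : 0 ≤ a := by
      by_contra hneg
      push_neg at hneg
      have hlt : ((a:ℝ) / 2 ^ p) < 0 := by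
        apply div_neg_of_neg_of_pos _ hp
        exact_mod_cast hneg
      linarith
    have ha1 : a ≤ (2 * k + 1) * 2 ^ p := by
      rw [div_le_iff₀ hp] at h1
      have h2 : (a:ℝ) ≤ (((2 * (k:ℤ) + 1) * 2 ^ p : ℤ) : ℝ) := by push_cast; linarith
      exact_mod_cast h2
    have hKint : (2:ℤ) ^ n < 2 * k + 1 := by
      have h2 : ((2:ℝ) ^ n) < (((2 * (k:ℤ) + 1) : ℤ) : ℝ) := by push_cast; linarith
      exact_mod_cast h2
    rcases eq_or_lt_of_le ha0 with heq | ha0'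
    · rw [← heq]
      norm_num
      exact MeanClosure.base (by simp)
    rcases eq_or_lt_of_le ha1 with heq | ha1'
    · have hx : (a:ℝ) / 2 ^ p = 2 * (k:ℝ) + 1 := by
        rw [heq]
        push_cast
        field_simp
      rw [hx]
      exact MeanClosure.base (by simp)
    obtain ⟨q, b, c, hbc, hrep⟩ := rep_exists n k hKint a p ha0' ha1'
    have hmem := comb_mem n (2 * (k:ℝ) + 1) (p + q) b c hbc
    have heq : ((b:ℝ) * 2 ^ n + (c:ℝ) * (2 * (k:ℝ) + 1)) / 2 ^ (p + q) = (a:ℝ) / 2 ^ p := by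
      have hcast : (b:ℝ) * 2 ^ n + (c:ℝ) * (2 * (k:ℝ) + 1) = (a:ℝ) * 2 ^ q := by
        have h3 : ((b * 2 ^ n + c * (2 * k + 1) : ℤ) : ℝ) = ((a * 2 ^ q : ℤ) : ℝ) := by
          exact_mod_cast congrArg (fun z : ℤ => (z : ℝ)) hrep
        push_cast at h3
        linarith
      rw [hcast, pow_add]
      have h2q : ((2:ℝ) ^ q) ≠ 0 := by positivity
      field_simp
    rw [← heq]
    exact hmem
end

section
/- Let X = {x₀, …, x_n} be affinely independent points in D^n (dyadic coordinates). Then the closure of X under the coordinatewise arithmetic mean operation equals the set of all points x₀r₀ + ⋯ + x_n r_n where each rᵢ is a dyadic rational in [0,1] and r₀ + ⋯ + r_n = 1. -/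
inductive MeanClosureV {n : ℕ} (X : Set (Fin n → ℝ)) : (Fin n → ℝ) → Prop
  | base {x} : x ∈ X → MeanClosureV X x
  | mean {x y} : MeanClosureV X x → MeanClosureV X y →
      MeanClosureV X (fun i => (x i + y i) / 2)

lemma isDyadic_mean_s17 {a b : ℝ} (ha : IsDyadic a) (hb : IsDyadic b) :
    IsDyadic ((a + b) / 2) := by
  obtain ⟨k, p, rfl⟩ := ha
  obtain ⟨l, q, rfl⟩ := hb
  refine ⟨k * 2 ^ q + l * 2 ^ p, p + q + 1, ?_⟩
  have hp : (0 : ℝ) < 2 ^ p := by positivity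
  have hq : (0 : ℝ) < 2 ^ q := by positivity
  rw [div_add_div _ _ (ne_of_gt hp) (ne_of_gt hq), div_div,
    div_eq_div_iff (by positivity) (by positivity)]
  push_cast
  ring

lemma split_exists {N : ℕ} : ∀ (H : ℕ) (k : Fin N → ℕ), H ≤ ∑ i, k i →
    ∃ a : Fin N → ℕ, (∀ i, a i ≤ k i) ∧ ∑ i, a i = H := by
  intro H
  induction H with
  | zero => exact fun k _ => ⟨0, fun i => Nat.zero_le _, by simp⟩
  | succ H ih =>
    intro k hk
    obtain ⟨a, ha, hsum⟩ := ih k (Nat.le_of_succ_le hk)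
    have hex : ∃ i, a i < k i := by
      by_contra h
      push_neg at h
      have : ∑ i, k i ≤ ∑ i, a i := Finset.sum_le_sum (fun i _ => h i)
      omega
    obtain ⟨i, hi⟩ := hex
    refine ⟨Function.update a i (a i + 1), ?_, ?_⟩
    · intro j
      by_cases hj : j = i
      · subst hj; simp; omega
      · simp [Function.update_of_ne hj]; exact ha j
    · rw [Finset.sum_update_of_mem (Finset.mem_univ i)]
      have h2 : a i + ∑ j ∈ Finset.univ.erase i, a j = ∑ j, a j :=
        Finset.add_sum_erase _ _ (Finset.mem_univ i)
      have : Finset.univ \ {i} = Finset.univ.erase i := by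
        ext j; simp [Finset.mem_erase, and_comm]
      rw [this]
      omega

lemma mean_of_nat_comb {n : ℕ} (x : Fin (n + 1) → (Fin n → ℝ)) :
    ∀ (m : ℕ) (k : Fin (n + 1) → ℕ), ∑ i, k i = 2 ^ m →
    MeanClosureV (Set.range x) (∑ i, ((k i : ℝ) / 2 ^ m) • x i) := by
  intro m
  induction m with
  | zero =>
    intro k hk
    simp only [pow_zero] at hk ⊢
    obtain ⟨i, hi⟩ : ∃ i, k i ≠ 0 := by
      by_contra h; push_neg at h; simp [h] at hk
    have hi1 : k i = 1 := by
      have h2 : k i + ∑ j ∈ Finset.univ.erase i, k j = ∑ j, k j :=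
        Finset.add_sum_erase _ _ (Finset.mem_univ i)
      omega
    have hothers : ∀ j, j ≠ i → k j = 0 := by
      intro j hj
      have h2 : k i + ∑ l ∈ Finset.univ.erase i, k l = ∑ l, k l :=
        Finset.add_sum_erase _ _ (Finset.mem_univ i)
      have h3 : ∑ l ∈ Finset.univ.erase i, k l = 0 := by omega
      have := (Finset.sum_eq_zero_iff).mp h3 j (by simp [hj])
      exact this
    have heq : (∑ j, ((k j : ℝ) / 1) • x j) = x i := by
      rw [Finset.sum_eq_single i]
      · simp [hi1]
      · intro j _ hj; simp [hothers j hj]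
      · intro h; exact absurd (Finset.mem_univ i) h
    rw [heq]
    exact .base ⟨i, rfl⟩
  | succ m ih =>
    intro k hk
    obtain ⟨a, ha, hasum⟩ := split_exists (2 ^ m) k
      (by rw [hk, pow_succ]; omega)
    set b := fun i => k i - a i with hb
    have hbsum : ∑ i, b i = 2 ^ m := by
      have : ∑ i, (a i + b i) = ∑ i, k i := by
        apply Finset.sum_congr rfl
        intro i _
        have := ha i
        simp [hb]
        omega
      rw [Finset.sum_add_distrib] at this
      rw [hk, pow_succ] at this
      omega
    have hA := ih a hasum
    have hB := ih b hbsum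
    have hM := MeanClosureV.mean hA hB
    have heq : (∑ i, ((k i : ℝ) / 2 ^ (m + 1)) • x i)
        = (fun j => ((∑ i, ((a i : ℝ) / 2 ^ m) • x i) j
            + (∑ i, ((b i : ℝ) / 2 ^ m) • x i) j) / 2) := by
      funext j
      simp only [Finset.sum_apply, Pi.smul_apply, smul_eq_mul]
      rw [← Finset.sum_add_distrib, Finset.sum_div]
      apply Finset.sum_congr rfl
      intro i _
      have hki : (k i : ℝ) = (a i : ℝ) + (b i : ℝ) := by
        have h1 := ha i
        have h2 : a i + b i = k i := by simp only [hb]; omega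
        push_cast [← h2]
        ring
      rw [hki, pow_succ]
      have h2 : (2 : ℝ) ^ m ≠ 0 := by positivity
      field_simp
    rw [heq]
    exact hM

theorem dyadic_simplex_description {n : ℕ} (x : Fin (n + 1) → (Fin n → ℝ))
    (hxd : ∀ i, ∀ j, IsDyadic (x i j))
    (hind : AffineIndependent ℝ x) :
    {y : Fin n → ℝ | MeanClosureV (Set.range x) y}
      = {y | ∃ r : Fin (n + 1) → ℝ,
          (∀ i, IsDyadic (r i) ∧ 0 ≤ r i ∧ r i ≤ 1) ∧
          (∑ i, r i) = 1 ∧ y = ∑ i, r i • x i} := by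
  ext y
  simp only [Set.mem_setOf_eq]
  constructor
  · intro h
    induction h with
    | @base z hz =>
      obtain ⟨i, rfl⟩ := hz
      refine ⟨fun j => if j = i then 1 else 0, ?_, ?_, ?_⟩
      · intro j
        by_cases hj : j = i
        · simp only [hj, if_pos rfl]
          exact ⟨⟨1, 0, by norm_num⟩, by norm_num, by norm_num⟩
        · simp only [if_neg hj]
          exact ⟨⟨0, 0, by norm_num⟩, by norm_num, by norm_num⟩
      · simp
      · rw [Finset.sum_eq_single i]
        · simp
        · intro j _ hj; simp [hj]
        · intro h; exact absurd (Finset.mem_univ i) h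
    | @mean u v hu hv ihu ihv =>
      obtain ⟨r, hr, hrsum, hru⟩ := ihu
      obtain ⟨s, hs, hssum, hsv⟩ := ihv
      refine ⟨fun i => (r i + s i) / 2, ?_, ?_, ?_⟩
      · intro i
        obtain ⟨hrd, hr0, hr1⟩ := hr i
        obtain ⟨hsd, hs0, hs1⟩ := hs i
        exact ⟨isDyadic_mean_s17 hrd hsd, by linarith, by linarith⟩
      · rw [← Finset.sum_div, Finset.sum_add_distrib, hrsum, hssum]
        norm_num
      · funext j
        simp only [hru, hsv, Finset.sum_apply, Pi.smul_apply, smul_eq_mul]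
        rw [← Finset.sum_add_distrib, Finset.sum_div]
        apply Finset.sum_congr rfl
        intro i _
        ring
  · rintro ⟨r, hr, hrsum, rfl⟩
    choose c m hc using fun i => (hr i).1
    set M := ∑ i, m i with hM
    have hmM : ∀ i, m i ≤ M := fun i =>
      Finset.single_le_sum (fun j _ => Nat.zero_le (m j)) (Finset.mem_univ i)
    have hkey : ∀ i, ((c i * 2 ^ (M - m i)).toNat : ℝ) = r i * 2 ^ M := by
      intro i
      have hpos : (0 : ℝ) < 2 ^ (m i) := by positivity
      have hcr : (c i : ℝ) = r i * 2 ^ (m i) := by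
        rw [hc i]; field_simp
      have hc0 : 0 ≤ c i := by
        have hr0 := (hr i).2.1
        have : (0 : ℝ) ≤ (c i : ℝ) := by
          rw [hcr]; positivity
        exact_mod_cast this
      have hnn : 0 ≤ c i * 2 ^ (M - m i) := by positivity
      have h1 : ((c i * 2 ^ (M - m i)).toNat : ℝ)
          = ((c i * 2 ^ (M - m i) : ℤ) : ℝ) := by
        rw [← Int.cast_natCast, Int.toNat_of_nonneg hnn]
      rw [h1]
      push_cast
      rw [hc i]
      have hsplit : (2 : ℝ) ^ M = 2 ^ (m i) * 2 ^ (M - m i) := by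
        rw [← pow_add]
        congr 1
        have := hmM i
        omega
      rw [hsplit]
      field_simp
    set k : Fin (n + 1) → ℕ := fun i => (c i * 2 ^ (M - m i)).toNat with hk
    have hksum : ∑ i, k i = 2 ^ M := by
      have hR : ((∑ i, k i : ℕ) : ℝ) = ((2 ^ M : ℕ) : ℝ) := by
        push_cast
        calc (∑ i, (k i : ℝ)) = ∑ i, r i * 2 ^ M := by
              apply Finset.sum_congr rfl
              intro i _
              exact hkey i
          _ = (∑ i, r i) * 2 ^ M := by rw [Finset.sum_mul]
          _ = 2 ^ M := by rw [hrsum]; ring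
      exact_mod_cast hR
    have heq : (∑ i, r i • x i) = ∑ i, ((k i : ℝ) / 2 ^ M) • x i := by
      apply Finset.sum_congr rfl
      intro i _
      congr 1
      rw [hkey i]
      have : (2 : ℝ) ^ M ≠ 0 := by positivity
      field_simp
    rw [heq]
    exact mean_of_nat_comb x M k hksum
end
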